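/- Let (X,T) be a simple, properly ordered Bratteli-Vershik system. If some telescoping of (X,T) is weakly well timed, then (X,T) is weakly well timed. -/

import Mathlib

set_option autoImplicit false

/-- An ordered Bratteli diagram: finite nonempty vertex sets `V n`, a single root
vertex at level `0`, finite edge sets `E n` (edges from level `n` to level `n+1`,
multiple edges allowed), every vertex has an outgoing edge, every non-root vertex
an incoming edge, and the edges into each vertex carry a linear order, encoded by
the relation `elt` which relates only edges with the same target. -/
structure BDiagram where
  V : ℕ → Type
  E : ℕ → Type
  fintV : ∀ n, Fintype (V n)
  fintE : ∀ n, Fintype (E n)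
  nonV : ∀ n, Nonempty (V n)
  rootSubsingleton : Subsingleton (V 0)
  src : ∀ {n}, E n → V n
  tgt : ∀ {n}, E n → V (n + 1)
  hasOut : ∀ (n : ℕ) (v : V n), ∃ e : E n, src e = v
  hasIn : ∀ (n : ℕ) (v : V (n + 1)), ∃ e : E n, tgt e = v
  elt : ∀ {n}, E n → E n → Prop
  elt_tgt : ∀ (n : ℕ) (e f : E n), elt e f → tgt e = tgt f
  elt_irrefl : ∀ (n : ℕ) (e : E n), ¬ elt e e
  elt_trans : ∀ (n : ℕ) (e f g : E n), elt e f → elt f g → elt e g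
  elt_total : ∀ (n : ℕ) (e f : E n), tgt e = tgt f → e ≠ f → elt e f ∨ elt f e

namespace BDiagram

variable (B : BDiagram)

def castV {m n : ℕ} (h : m = n) (v : B.V m) : B.V n := h ▸ v

/-- An edge is minimal if no edge (into the same target) is below it. -/
def IsMinEdge {n : ℕ} (e : B.E n) : Prop := ∀ e' : B.E n, ¬ B.elt e' e

/-- An edge is maximal if no edge (into the same target) is above it. -/
def IsMaxEdge {n : ℕ} (e : B.E n) : Prop := ∀ e' : B.E n, ¬ B.elt e e'

/-- The space of infinite paths from the root. -/
def PathSpace : Type := { x : ∀ n, B.E n // ∀ n, B.tgt (x n) = B.src (x (n + 1)) }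

def IsMinPath (x : B.PathSpace) : Prop := ∀ n, B.IsMinEdge (x.1 n)

def IsMaxPath (x : B.PathSpace) : Prop := ∀ n, B.IsMaxEdge (x.1 n)

/-- Properly ordered: unique minimal and unique maximal path. -/
def ProperlyOrdered : Prop :=
  (∃! x : B.PathSpace, B.IsMinPath x) ∧ (∃! x : B.PathSpace, B.IsMaxPath x)

/-- The partial order on cofinal paths: `x < y` iff they eventually agree and at the
last disagreement the edge of `x` is below the edge of `y`. -/
def pathLT (x y : B.PathSpace) : Prop :=
  ∃ N : ℕ, B.elt (x.1 N) (y.1 N) ∧ ∀ n : ℕ, N < n → x.1 n = y.1 n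

/-- `T` is the Vershik map: each non-maximal path goes to its successor, and each
maximal path goes to a minimal path. -/
def IsVershik (T : B.PathSpace ≃ B.PathSpace) : Prop :=
  (∀ x : B.PathSpace, ¬ B.IsMaxPath x →
    B.pathLT x (T x) ∧ ∀ z : B.PathSpace, B.pathLT x z → ¬ B.pathLT z (T x)) ∧
  (∀ x : B.PathSpace, B.IsMaxPath x → B.IsMinPath (T x))

/-- `f` is a chain of consecutive edges on levels `[a, b)`. -/
def SegOn (f : ∀ i, B.E i) (a b : ℕ) : Prop :=
  ∀ i : ℕ, a ≤ i → i + 1 < b → B.tgt (f i) = B.src (f (i + 1))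

/-- Simplicity: some telescoping has complete connections between adjacent levels. -/
def Simple : Prop :=
  ∃ ns : ℕ → ℕ, StrictMono ns ∧ ns 0 = 0 ∧
    ∀ (l c : ℕ), ns (l + 1) = c + 1 →
      ∀ (v : B.V (ns l)) (w : B.V (c + 1)),
        ∃ f : ∀ i, B.E i, B.SegOn f (ns l) (c + 1) ∧ B.src (f (ns l)) = v ∧ B.tgt (f c) = w

/-- The natural (Cantor) topology on the path space, induced from the product of
the discrete topologies on the edge sets. -/
def pathTop : TopologicalSpace B.PathSpace :=
  TopologicalSpace.induced Subtype.val (@Pi.topologicalSpace ℕ B.E (fun _ => ⊥))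

/-- Integer iterates of a bijection of the path space. -/
def iterZ (T : B.PathSpace ≃ B.PathSpace) (m : ℤ) : B.PathSpace ≃ B.PathSpace :=
  (T : Equiv.Perm B.PathSpace) ^ m

/-- Two paths have the same `k`-coding: for every time `m` the initial segments of
`T^m x` and `T^m y` from the root to level `k` coincide. -/
def SameCoding (T : B.PathSpace ≃ B.PathSpace) (k : ℕ) (x y : B.PathSpace) : Prop :=
  ∀ (m : ℤ) (i : ℕ), i < k → ((B.iterZ T m) x).1 i = ((B.iterZ T m) y).1 i

/-- A depth `k` pair: distinct paths with the same `k`-coding but not the same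
`(k+1)`-coding. -/
def DepthPair (T : B.PathSpace ≃ B.PathSpace) (k : ℕ) (x y : B.PathSpace) : Prop :=
  x ≠ y ∧ B.SameCoding T k x y ∧ ¬ B.SameCoding T (k + 1) x y

/-- The pair `x, y` has a `j` cut: for some time `m`, both `T^m x` and `T^m y` are
minimal from the root into level `j`. -/
def HasCut (T : B.PathSpace ≃ B.PathSpace) (j : ℕ) (x y : B.PathSpace) : Prop :=
  ∃ m : ℤ, (∀ i : ℕ, i < j → B.IsMinEdge (((B.iterZ T m) x).1 i)) ∧
    (∀ i : ℕ, i < j → B.IsMinEdge (((B.iterZ T m) y).1 i))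

/-- Nonexpansive: for every `k ≥ 1` there are two distinct paths with the same
`k`-coding. -/
def Nonexpansive (T : B.PathSpace ≃ B.PathSpace) : Prop :=
  ∀ k : ℕ, 1 ≤ k → ∃ x y : B.PathSpace, x ≠ y ∧ B.SameCoding T k x y

/-- Well timed: for every `k ≥ 1` and every `j > k` there is a depth `k` pair with
a `j` cut. -/
def WellTimed (T : B.PathSpace ≃ B.PathSpace) : Prop :=
  ∀ k : ℕ, 1 ≤ k → ∀ j : ℕ, k < j →
    ∃ x y : B.PathSpace, B.DepthPair T k x y ∧ B.HasCut T j x y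

/-- Very well timed: for every `k ≥ 1` there is a depth `k` pair having a `j` cut
for every `j > k`. -/
def VeryWellTimed (T : B.PathSpace ≃ B.PathSpace) : Prop :=
  ∀ k : ℕ, 1 ≤ k →
    ∃ x y : B.PathSpace, B.DepthPair T k x y ∧ ∀ j : ℕ, k < j → B.HasCut T j x y

/-- Weakly well timed: for infinitely many `k ≥ 1`, for every `j > k` there is a
depth `k` pair with a `j` cut. -/
def WeaklyWellTimed (T : B.PathSpace ≃ B.PathSpace) : Prop :=
  ∀ K : ℕ, ∃ k : ℕ, K ≤ k ∧ 1 ≤ k ∧ ∀ j : ℕ, k < j →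
    ∃ x y : B.PathSpace, B.DepthPair T k x y ∧ B.HasCut T j x y

/-- Untimed: for every `k ≥ 1` there is a `j > k` such that no depth `k` pair has a
`j` cut. -/
def Untimed (T : B.PathSpace ≃ B.PathSpace) : Prop :=
  ∀ k : ℕ, 1 ≤ k → ∃ j : ℕ, k < j ∧
    ∀ x y : B.PathSpace, B.DepthPair T k x y → ¬ B.HasCut T j x y

/-- Very untimed: for every `k ≥ 1`, no depth `k` pair has a `(k+1)` cut. -/
def VeryUntimed (T : B.PathSpace ≃ B.PathSpace) : Prop :=
  ∀ k : ℕ, 1 ≤ k →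
    ∀ x y : B.PathSpace, B.DepthPair T k x y → ¬ B.HasCut T (k + 1) x y

/-- Finite paths from the root to level `n`. -/
def FinPath (n : ℕ) : Type :=
  { f : (i : Fin n) → B.E i.val //
    ∀ (i : ℕ) (h : i + 1 < n), B.tgt (f ⟨i, by omega⟩) = B.src (f ⟨i + 1, h⟩) }

/-- The lexicographic (from the end) order on finite paths to level `n` induced by
the orders on the edges. -/
def finLT {n : ℕ} (p q : B.FinPath n) : Prop :=
  ∃ (N : ℕ) (h : N < n), B.elt (p.1 ⟨N, h⟩) (q.1 ⟨N, h⟩) ∧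
    ∀ (i : ℕ) (hi : i < n), N < i → p.1 ⟨i, hi⟩ = q.1 ⟨i, hi⟩

/-- The finite path `p` to level `n` ends at the vertex `v`. -/
def EndsAt {n : ℕ} (p : B.FinPath n) (v : B.V n) : Prop :=
  ∀ (m : ℕ) (h : n = m + 1), B.tgt (p.1 ⟨m, by omega⟩) = B.castV h v

/-- The initial segment of an infinite path, from the root to level `n`. -/
def pathInit (x : B.PathSpace) (n : ℕ) : B.FinPath n :=
  ⟨fun i => x.1 i.val, fun i _ => x.2 i⟩

/-- The vertex of an infinite path at level `n`. -/
def pathVert (x : B.PathSpace) (n : ℕ) : B.V n := B.src (x.1 n)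

theorem pathInit_endsAt (x : B.PathSpace) (n : ℕ) :
    B.EndsAt (B.pathInit x n) (B.pathVert x n) := by
  intro m h
  subst h
  exact x.2 m

/-- Truncation of a finite path to a lower level. -/
def truncTo {n : ℕ} (k : ℕ) (hk : k ≤ n) (p : B.FinPath n) : B.FinPath k :=
  ⟨fun i => p.1 ⟨i.val, by omega⟩, fun i h => p.2 i (by omega)⟩

/-- Paths `x, x'` are `k`-equivalent at level `n`: there is an order isomorphism
between the sets of finite paths from the root into their level-`n` vertices which
preserves truncations to level `k` (equality of `k`-basic blocks) and which matches
the initial segment of `x` with the initial segment of `x'` (the "dot" is in the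
same place). -/
def KEquivAt (k n : ℕ) (x x' : B.PathSpace) : Prop :=
  ∃ φ : { p : B.FinPath n // B.EndsAt p (B.pathVert x n) } ≃
      { p : B.FinPath n // B.EndsAt p (B.pathVert x' n) },
    (∀ p q, B.finLT p.1 q.1 ↔ B.finLT (φ p).1 (φ q).1) ∧
    (∀ p (i : ℕ) (hik : i < k) (hin : i < n), ((φ p).1).1 ⟨i, hin⟩ = (p.1).1 ⟨i, hin⟩) ∧
    φ ⟨B.pathInit x n, B.pathInit_endsAt x n⟩ = ⟨B.pathInit x' n, B.pathInit_endsAt x' n⟩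

/-- Paths are `k`-equivalent: they agree from the root to level `k` and are
`k`-equivalent at every level `n > k`. -/
def KEquivPaths (k : ℕ) (x x' : B.PathSpace) : Prop :=
  (∀ i : ℕ, i < k → x.1 i = x'.1 i) ∧ ∀ n : ℕ, k < n → B.KEquivAt k n x x'

/-- Standard nonexpansive: for every `k ≥ 1` there is a pair of distinct
`k`-equivalent paths. -/
def SNE : Prop := ∀ k : ℕ, 1 ≤ k → ∃ x x' : B.PathSpace, x ≠ x' ∧ B.KEquivPaths k x x'

/-!  ### Telescoping  -/

theorem castV_eq_of_heq {m n : ℕ} (h : m = n) {v : B.V m} {w : B.V n} (hw : HEq v w) :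
    B.castV h v = w := by
  subst h
  exact eq_of_heq hw

theorem castV_heq {m n : ℕ} (h : m = n) (v : B.V m) : HEq (B.castV h v) v := by
  subst h
  rfl

theorem castV_inj {m n : ℕ} (h : m = n) {v w : B.V m}
    (hvw : B.castV h v = B.castV h w) : v = w := by
  subst h
  exact hvw

def castE {m n : ℕ} (h : m = n) (e : B.E m) : B.E n := h ▸ e

noncomputable def chainFrom (a : ℕ) (v : B.V a) : (i : ℕ) → B.E (a + i)
  | 0 => (B.hasOut a v).choose
  | i + 1 => (B.hasOut (a + i + 1) (B.tgt (chainFrom a v i))).choose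

theorem chainFrom_src_zero (a : ℕ) (v : B.V a) : B.src (B.chainFrom a v 0) = v :=
  (B.hasOut a v).choose_spec

theorem chainFrom_src_succ (a : ℕ) (v : B.V a) (i : ℕ) :
    B.src (B.chainFrom a v (i + 1)) = B.tgt (B.chainFrom a v i) :=
  (B.hasOut (a + i + 1) (B.tgt (B.chainFrom a v i))).choose_spec

noncomputable def chainTo (a : ℕ) : (j : ℕ) → (w : B.V (a + j + 1)) → (i : ℕ) → i ≤ j → B.E (a + i)
  | 0, w, i, _ => B.castE (by omega : a + 0 = a + i) (B.hasIn a w).choose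
  | j + 1, w, i, _ =>
      if h : i ≤ j then chainTo a j (B.src (B.hasIn (a + j + 1) w).choose) i h
      else B.castE (by omega : a + (j + 1) = a + i) (B.hasIn (a + j + 1) w).choose

theorem chainTo_tgt_last (a : ℕ) : ∀ (j : ℕ) (w : B.V (a + j + 1)),
    B.tgt (B.chainTo a j w j le_rfl) = w := by
  intro j w
  cases j with
  | zero =>
      simp only [chainTo]
      exact (B.hasIn a w).choose_spec
  | succ j =>
      simp only [chainTo]
      rw [dif_neg (by omega : ¬ j + 1 ≤ j)]
      exact (B.hasIn (a + j + 1) w).choose_spec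

theorem chainTo_chain (a : ℕ) : ∀ (j : ℕ) (w : B.V (a + j + 1)) (i : ℕ) (h : i + 1 ≤ j)
    (h' : i ≤ j), B.tgt (B.chainTo a j w i h') = B.src (B.chainTo a j w (i + 1) h) := by
  intro j
  induction j with
  | zero => intro w i h h'; omega
  | succ j ih =>
      intro w i h h'
      by_cases hij : i + 1 ≤ j
      · simp only [chainTo]
        rw [dif_pos (by omega : i ≤ j), dif_pos hij]
        exact ih _ i hij (by omega)
      · have hi : i = j := by omega
        subst hi
        simp only [chainTo]
        rw [dif_pos (le_refl i), dif_neg (by omega : ¬ i + 1 ≤ i)]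
        exact B.chainTo_tgt_last a i _


def TelE (a b : ℕ) : Type :=
  { f : (i : Fin (b - a)) → B.E (a + i.val) //
    ∀ (i : ℕ) (h : i + 1 < b - a), B.tgt (f ⟨i, by omega⟩) = B.src (f ⟨i + 1, h⟩) }

def telSrc {a b : ℕ} (hab : a < b) (f : B.TelE a b) : B.V a :=
  B.src (f.1 ⟨0, by omega⟩)

def telTgt {a b : ℕ} (hab : a < b) (f : B.TelE a b) : B.V b :=
  B.castV (by omega : a + (b - a - 1) + 1 = b) (B.tgt (f.1 ⟨b - a - 1, by omega⟩))

def telLT {a b : ℕ} (f g : B.TelE a b) : Prop :=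
  ∃ (N : ℕ) (h : N < b - a), B.elt (f.1 ⟨N, h⟩) (g.1 ⟨N, h⟩) ∧
    ∀ (i : ℕ) (hi : i < b - a), N < i → f.1 ⟨i, hi⟩ = g.1 ⟨i, hi⟩

noncomputable def Telescope (ns : ℕ → ℕ) (hmono : StrictMono ns) (h0 : ns 0 = 0) : BDiagram where
  V l := B.V (ns l)
  E l := B.TelE (ns l) (ns (l + 1))
  fintV l := B.fintV (ns l)
  fintE l := by
    classical
    letI : ∀ i : Fin (ns (l + 1) - ns l), Fintype (B.E (ns l + i.val)) := fun i => B.fintE _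
    exact Subtype.fintype _
  nonV l := B.nonV (ns l)
  rootSubsingleton := by show Subsingleton (B.V (ns 0)); rw [h0]; exact B.rootSubsingleton
  src {l} f := B.telSrc (hmono (Nat.lt_succ_self l)) f
  tgt {l} f := B.telTgt (hmono (Nat.lt_succ_self l)) f
  hasOut := by
    intro l v
    refine ⟨⟨fun i => B.chainFrom (ns l) v i.val,
      fun i h => (B.chainFrom_src_succ (ns l) v i).symm⟩, ?_⟩
    exact B.chainFrom_src_zero (ns l) v
  hasIn := by
    intro l w
    have hab : ns l < ns (l + 1) := hmono (Nat.lt_succ_self l)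
    have hj : ns l + (ns (l + 1) - ns l - 1) + 1 = ns (l + 1) := by omega
    refine ⟨⟨fun i => B.chainTo (ns l) (ns (l + 1) - ns l - 1) (B.castV hj.symm w) i.val
        (by omega), fun i h => B.chainTo_chain _ _ _ i (by omega) (by omega)⟩, ?_⟩
    show B.castV (by omega) (B.tgt (B.chainTo (ns l) (ns (l + 1) - ns l - 1)
      (B.castV hj.symm w) (ns (l + 1) - ns l - 1) (by omega))) = w
    rw [B.chainTo_tgt_last]
    exact B.castV_eq_of_heq _ (B.castV_heq _ w)
  elt {l} f g := B.telLT f g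
  elt_tgt := by
    rintro l f g ⟨N, hN, hlt, hgt⟩
    show B.telTgt _ f = B.telTgt _ g
    unfold telTgt
    refine congrArg (B.castV _) ?_
    rcases eq_or_lt_of_le (show N ≤ ns (l + 1) - ns l - 1 by omega) with h | h
    · subst h
      exact B.elt_tgt _ _ _ hlt
    · exact congrArg B.tgt (hgt _ (by omega) h)
  elt_irrefl := by
    rintro l f ⟨N, h, hlt, -⟩
    exact B.elt_irrefl _ _ hlt
  elt_trans := by
    rintro l f g h ⟨N₁, hN₁, hlt₁, hgt₁⟩ ⟨N₂, hN₂, hlt₂, hgt₂⟩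
    rcases lt_trichotomy N₁ N₂ with hc | hc | hc
    · exact ⟨N₂, hN₂, by rw [hgt₁ N₂ hN₂ hc]; exact hlt₂,
        fun i hi hN => (hgt₁ i hi (by omega)).trans (hgt₂ i hi hN)⟩
    · subst hc
      exact ⟨N₁, hN₁, B.elt_trans _ _ _ _ hlt₁ hlt₂,
        fun i hi hN => (hgt₁ i hi hN).trans (hgt₂ i hi hN)⟩
    · refine ⟨N₁, hN₁, ?_, fun i hi hN => (hgt₁ i hi hN).trans (hgt₂ i hi (by omega))⟩
      rw [← hgt₂ N₁ hN₁ hc]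
      exact hlt₁
  elt_total := by
    intro l f g htgt hne
    classical
    have hab : ns l < ns (l + 1) := hmono (Nat.lt_succ_self l)
    set b := ns (l + 1) - ns l with hb
    have hex : ∃ N, ∃ h : N < b, f.1 ⟨N, h⟩ ≠ g.1 ⟨N, h⟩ := by
      by_contra hco
      push_neg at hco
      exact hne (Subtype.ext (funext fun i => hco i.val i.isLt))
    set P : ℕ → Prop := fun N => ∃ h : N < b, f.1 ⟨N, h⟩ ≠ g.1 ⟨N, h⟩ with hP
    obtain ⟨N₀, hN₀⟩ := hex
    set N := Nat.findGreatest P b with hNdef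
    have hPN : P N := Nat.findGreatest_spec (le_of_lt hN₀.choose) hN₀
    have hafter : ∀ i (hi : i < b), N < i → f.1 ⟨i, hi⟩ = g.1 ⟨i, hi⟩ := by
      intro i hi hNi
      by_contra hcon
      exact Nat.findGreatest_is_greatest hNi (le_of_lt hi) ⟨hi, hcon⟩
    clear_value N
    obtain ⟨hNb, hNne⟩ := hPN
    have htgtN : B.tgt (f.1 ⟨N, hNb⟩) = B.tgt (g.1 ⟨N, hNb⟩) := by
      rcases eq_or_lt_of_le (show N ≤ b - 1 by omega) with h | h
      · -- N is the last index; use equality of targets of the composite edges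
        subst h
        exact B.castV_inj _ htgt
      · have h2 : f.1 ⟨N + 1, by omega⟩ = g.1 ⟨N + 1, by omega⟩ :=
          hafter (N + 1) (by omega) (by omega)
        rw [f.2 N (by omega), g.2 N (by omega), h2]
    rcases B.elt_total _ _ _ htgtN hNne with h | h
    · exact Or.inl ⟨N, hNb, h, hafter⟩
    · exact Or.inr ⟨N, hNb, h, fun i hi hN => (hafter i hi hN).symm⟩

def teleMap (ns : ℕ → ℕ) (hmono : StrictMono ns) (h0 : ns 0 = 0) (x : B.PathSpace) :
    (B.Telescope ns hmono h0).PathSpace :=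
  ⟨fun l => ⟨fun i => x.1 (ns l + i.val), fun i _ => x.2 (ns l + i)⟩, fun l => by
    have hab : ns l < ns (l + 1) := hmono (Nat.lt_succ_self l)
    have hm : ns l + (ns (l + 1) - ns l - 1) + 1 = ns (l + 1) := by omega
    show B.castV _ (B.tgt (x.1 (ns l + (ns (l + 1) - ns l - 1)))) = B.src (x.1 (ns (l + 1) + 0))
    rw [x.2 (ns l + (ns (l + 1) - ns l - 1))]
    exact B.castV_eq_of_heq _ (by rw [hm]; exact HEq.rfl)⟩


/-- Level `n+1` is uniformly ordered: there is a single nonempty block `P` of paths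
from the root to level `n` such that the `n`-basic block at every vertex at level
`n+1` is a positive power of `P`. -/
def UniformlyOrderedLevel (n : ℕ) : Prop :=
  ∃ (p : ℕ) (hp : 0 < p) (P : Fin p → B.FinPath n),
    ∀ v : B.V (n + 1), ∃ (m : ℕ), 0 < m ∧
      ∃ enum : Fin (m * p) ≃ { q : B.FinPath (n + 1) // B.EndsAt q v },
        (∀ i j : Fin (m * p), i < j ↔ B.finLT (enum i).1 (enum j).1) ∧
        (∀ i : Fin (m * p),
          B.truncTo n (Nat.le_succ n) (enum i).1 = P ⟨i.val % p, Nat.mod_lt _ hp⟩)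

/-- The ordinal label of an edge: its position in the linear order on the edges
into its target. -/
noncomputable def edgeLabel {n : ℕ} (e : B.E n) : ℕ := Nat.card { e' : B.E n // B.elt e' e }

/-- Deterministic: for every `n ≥ 1`, distinct edges with the same source at level
`n` have different ordinal labels. -/
def Deterministic : Prop :=
  ∀ n : ℕ, 1 ≤ n → ∀ e f : B.E n, B.src e = B.src f → e ≠ f →
    B.edgeLabel e ≠ B.edgeLabel f

end BDiagram

/-- A Bratteli–Vershik system: a simple, properly ordered ordered Bratteli diagram
together with its Vershik map. -/
structure BVSystem where
  B : BDiagram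
  T : B.PathSpace ≃ B.PathSpace
  proper : B.ProperlyOrdered
  simple : B.Simple
  vershik : B.IsVershik T

/-- Conjugacy of systems: an equivariant homeomorphism of the path spaces taking
minimal paths to minimal paths. -/
def Conjugate (S S' : BVSystem) : Prop :=
  ∃ φ : S.B.PathSpace ≃ S'.B.PathSpace,
    (@Continuous _ _ S.B.pathTop S'.B.pathTop φ) ∧
    (@Continuous _ _ S'.B.pathTop S.B.pathTop φ.symm) ∧
    (∀ x, φ (S.T x) = S'.T (φ x)) ∧
    (∀ x, S.B.IsMinPath x → S'.B.IsMinPath (φ x))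

/-- An odometer: a system whose diagram has exactly one vertex at every level. -/
def IsOdometer (S : BVSystem) : Prop := ∀ n, Subsingleton (S.B.V n)


namespace BDiagram

section Aux

variable (B : BDiagram)

theorem castE_heq {m n : ℕ} (h : m = n) (e : B.E m) : HEq (B.castE h e) e := by
  subst h; rfl

theorem castE_self {n : ℕ} (h : n = n) (e : B.E n) : B.castE h e = e := rfl

theorem castV_self {n : ℕ} (h : n = n) (v : B.V n) : B.castV h v = v := rfl

theorem path_edge_cast (x : B.PathSpace) {m n : ℕ} (h : m = n) :
    B.castE h (x.1 m) = x.1 n := by subst h; rfl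

theorem src_castE {m n : ℕ} (h : m = n) (e : B.E m) :
    B.src (B.castE h e) = B.castV h (B.src e) := by subst h; rfl

theorem tgt_castE {m n : ℕ} (h : m = n) (e : B.E m) :
    B.tgt (B.castE h e) = B.castV (congrArg (· + 1) h) (B.tgt e) := by subst h; rfl

theorem elt_castE_iff {m n : ℕ} (h : m = n) (a b : B.E m) :
    B.elt (B.castE h a) (B.castE h b) ↔ B.elt a b := by subst h; rfl

theorem castV_eq_castV {m n m' : ℕ} (h : m = n) (h' : m' = n) {v : B.V m} {w : B.V m'}
    (hvw : HEq v w) : B.castV h v = B.castV h' w := by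
  subst h; subst h'; exact congrArg _ (eq_of_heq hvw)

theorem isMaxEdge_congr (x : B.PathSpace) {m n : ℕ} (h : m = n) :
    B.IsMaxEdge (x.1 m) ↔ B.IsMaxEdge (x.1 n) := by subst h; rfl

theorem isMinEdge_congr (x : B.PathSpace) {m n : ℕ} (h : m = n) :
    B.IsMinEdge (x.1 m) ↔ B.IsMinEdge (x.1 n) := by subst h; rfl

theorem telE_apply_heq {a b : ℕ} (f : B.TelE a b) {i j : Fin (b - a)}
    (h : i.val = j.val) : HEq (f.1 i) (f.1 j) := by
  cases Fin.ext h; rfl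

theorem telE_src_heq {a b : ℕ} (f : B.TelE a b) {i j : Fin (b - a)}
    (h : i.val = j.val) : HEq (B.src (f.1 i)) (B.src (f.1 j)) := by
  cases Fin.ext h; rfl

theorem telE_tgt_heq {a b : ℕ} (f : B.TelE a b) {i j : Fin (b - a)}
    (h : i.val = j.val) : HEq (B.tgt (f.1 i)) (B.tgt (f.1 j)) := by
  cases Fin.ext h; rfl

/-- Uniqueness of the Vershik successor. -/
theorem succ_unique (C : BDiagram) (w a b : C.PathSpace)
    (ha1 : C.pathLT w a) (ha2 : ∀ z, C.pathLT w z → ¬ C.pathLT z a)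
    (hb1 : C.pathLT w b) (hb2 : ∀ z, C.pathLT w z → ¬ C.pathLT z b) : a = b := by
  classical
  by_contra hne
  obtain ⟨Na, -, hta⟩ := id ha1
  obtain ⟨Nb, -, htb⟩ := id hb1
  set M := max Na Nb with hM
  have hcof : ∀ n, M < n → a.1 n = b.1 n := by
    intro n hn
    rw [← hta n (by omega), ← htb n (by omega)]
  have hex : ∃ n, a.1 n ≠ b.1 n := by
    by_contra hco
    push_neg at hco
    exact hne (Subtype.ext (funext hco))
  set P : ℕ → Prop := fun n => a.1 n ≠ b.1 n with hP
  obtain ⟨n₀, hn₀⟩ := hex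
  have hn₀M : n₀ ≤ M := by
    by_contra hc
    exact hn₀ (hcof n₀ (by omega))
  set N := Nat.findGreatest P M with hNdef
  have hPN : P N := Nat.findGreatest_spec hn₀M hn₀
  have hafter : ∀ n, N < n → a.1 n = b.1 n := by
    intro n hn
    by_cases hnM : n ≤ M
    · by_contra hc
      exact Nat.findGreatest_is_greatest hn hnM hc
    · exact hcof n (by omega)
  have htgt : C.tgt (a.1 N) = C.tgt (b.1 N) := by
    rw [a.2 N, b.2 N, hafter (N + 1) (Nat.lt_succ_self N)]
  rcases C.elt_total N _ _ htgt hPN with h | h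
  · exact hb2 a ha1 ⟨N, h, hafter⟩
  · exact ha2 b hb1 ⟨N, h, fun n hn => (hafter n hn).symm⟩

variable (ns : ℕ → ℕ)

/-- The block index: the level `l` of the telescoping with `ns l ≤ i < ns (l+1)`. -/
def blk (i : ℕ) : ℕ := Nat.findGreatest (fun l => ns l ≤ i) i

theorem blk_le (h0 : ns 0 = 0) (i : ℕ) : ns (blk ns i) ≤ i :=
  Nat.findGreatest_spec (P := fun l => ns l ≤ i) (Nat.zero_le i)
    (by show ns 0 ≤ i; rw [h0]; exact Nat.zero_le i)

theorem lt_blk_succ (hmono : StrictMono ns) (i : ℕ) : i < ns (blk ns i + 1) := by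
  by_contra hc
  push_neg at hc
  have h1 : blk ns i + 1 ≤ ns (blk ns i + 1) := hmono.le_apply
  have hbl : Nat.findGreatest (fun l => ns l ≤ i) i = blk ns i := rfl
  exact Nat.findGreatest_is_greatest (P := fun l => ns l ≤ i)
    (Nat.lt_succ_self _) (by omega) hc

theorem blk_eq (hmono : StrictMono ns) (h0 : ns 0 = 0) {l i : ℕ}
    (h1 : ns l ≤ i) (h2 : i < ns (l + 1)) : blk ns i = l := by
  rcases lt_trichotomy (blk ns i) l with hc | hc | hc
  · have ha := hmono.monotone (show blk ns i + 1 ≤ l by omega)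
    have hb := lt_blk_succ ns hmono i
    omega
  · exact hc
  · have ha := hmono.monotone (show l + 1 ≤ blk ns i by omega)
    have hb := blk_le ns h0 i
    omega

theorem blk_lt_of_lt (hmono : StrictMono ns) (h0 : ns 0 = 0) {i l : ℕ}
    (h : i < ns l) : blk ns i < l := by
  by_contra hc
  push_neg at hc
  have ha := hmono.monotone hc
  have hb := blk_le ns h0 i
  omega

variable (hmono : StrictMono ns) (h0 : ns 0 = 0)

/-- The edge function of the inverse of `teleMap`. -/
noncomputable def teleInvFun (y : (B.Telescope ns hmono h0).PathSpace) (i : ℕ) : B.E i :=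
  have h1 : ns (blk ns i) ≤ i := blk_le ns h0 i
  have h2 : i < ns (blk ns i + 1) := lt_blk_succ ns hmono i
  B.castE (Nat.add_sub_cancel' h1)
    ((y.1 (blk ns i)).1 ⟨i - ns (blk ns i), by omega⟩)

theorem teleInvFun_eq (y : (B.Telescope ns hmono h0).PathSpace) {l i : ℕ}
    (h1 : ns l ≤ i) (h2 : i < ns (l + 1)) :
    B.teleInvFun ns hmono h0 y i
      = B.castE (Nat.add_sub_cancel' h1) ((y.1 l).1 ⟨i - ns l, by omega⟩) := by
  have hb : blk ns i = l := blk_eq ns hmono h0 h1 h2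
  subst hb
  rfl

theorem teleInvFun_compat (y : (B.Telescope ns hmono h0).PathSpace) (i : ℕ) :
    B.tgt (B.teleInvFun ns hmono h0 y i) = B.src (B.teleInvFun ns hmono h0 y (i + 1)) := by
  set l := blk ns i with hl
  have h1 : ns l ≤ i := blk_le ns h0 i
  have h2 : i < ns (l + 1) := lt_blk_succ ns hmono i
  by_cases hc : i + 1 < ns (l + 1)
  · rw [B.teleInvFun_eq ns hmono h0 y h1 h2,
      B.teleInvFun_eq ns hmono h0 y (show ns l ≤ i + 1 by omega) hc,
      B.src_castE, B.tgt_castE]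
    refine B.castV_eq_castV _ _ ?_
    refine HEq.trans (heq_of_eq ((y.1 l).2 (i - ns l) (by omega))) ?_
    exact B.telE_src_heq _ (by show (i - ns l) + 1 = i + 1 - ns l; omega)
  · have hi1 : i + 1 = ns (l + 1) := by omega
    have hstep : ns (l + 1) < ns (l + 1 + 1) := hmono (by omega)
    rw [B.teleInvFun_eq ns hmono h0 y h1 h2,
      B.teleInvFun_eq ns hmono h0 y (l := l + 1) (by omega) (by omega),
      B.src_castE, B.tgt_castE]
    refine B.castV_eq_castV _ _ ?_
    have hstep0 : ns l < ns (l + 1) := hmono (by omega)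
    have hy' : B.castV (show ns l + (ns (l + 1) - ns l - 1) + 1 = ns (l + 1) by omega)
        (B.tgt ((y.1 l).1 ⟨ns (l + 1) - ns l - 1, by omega⟩))
        = B.src ((y.1 (l + 1)).1 ⟨0, by omega⟩) := y.2 l
    have hheq1 : HEq (B.tgt ((y.1 l).1 ⟨i - ns l, by omega⟩))
        (B.src ((y.1 (l + 1)).1 ⟨0, by omega⟩)) := by
      refine HEq.trans ?_ (heq_of_eq hy')
      refine HEq.trans ?_ (B.castV_heq _ _).symm
      exact B.telE_tgt_heq _ (by show i - ns l = ns (l + 1) - ns l - 1; omega)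
    refine HEq.trans hheq1 ?_
    exact B.telE_src_heq _ (by show (0:ℕ) = i + 1 - ns (l + 1); omega)

/-- The inverse of `teleMap`. -/
noncomputable def teleInv (y : (B.Telescope ns hmono h0).PathSpace) : B.PathSpace :=
  ⟨B.teleInvFun ns hmono h0 y, B.teleInvFun_compat ns hmono h0 y⟩

theorem teleInv_teleMap (x : B.PathSpace) :
    B.teleInv ns hmono h0 (B.teleMap ns hmono h0 x) = x := by
  refine Subtype.ext (funext fun i => ?_)
  show B.teleInvFun ns hmono h0 (B.teleMap ns hmono h0 x) i = x.1 i
  have h1 : ns (blk ns i) ≤ i := blk_le ns h0 i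
  have h2 : i < ns (blk ns i + 1) := lt_blk_succ ns hmono i
  rw [B.teleInvFun_eq ns hmono h0 _ h1 h2]
  show B.castE _ (x.1 (ns (blk ns i) + (i - ns (blk ns i)))) = x.1 i
  exact B.path_edge_cast x (by omega)

theorem teleMap_teleInv (y : (B.Telescope ns hmono h0).PathSpace) :
    B.teleMap ns hmono h0 (B.teleInv ns hmono h0 y) = y := by
  refine Subtype.ext (funext fun l => ?_)
  refine Subtype.ext (funext fun j => ?_)
  show B.teleInvFun ns hmono h0 y (ns l + j.val) = (y.1 l).1 j
  have hj := j.isLt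
  rw [B.teleInvFun_eq ns hmono h0 y (l := l) (by omega) (by omega)]
  refine eq_of_heq (HEq.trans (B.castE_heq _ _) ?_)
  exact B.telE_apply_heq _ (by show ns l + j.val - ns l = j.val; omega)

/-- Modify a block below a given edge position. -/
theorem exists_modBlock {a b : ℕ} (f : B.TelE a b) {N : ℕ} (hN : N < b - a)
    (e : B.E (a + N)) (hte : B.tgt e = B.tgt (f.1 ⟨N, hN⟩)) :
    ∃ g : B.TelE a b, g.1 ⟨N, hN⟩ = e ∧
      ∀ (i : ℕ) (hi : i < b - a), N < i → g.1 ⟨i, hi⟩ = f.1 ⟨i, hi⟩ := by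
  classical
  set g1 : (i : Fin (b - a)) → B.E (a + i.val) := fun i =>
    if h : i.val < N then
      B.chainTo a (N - 1) (B.castV (by omega) (B.src e)) i.val (by omega)
    else if h2 : i.val = N then B.castE (by omega) e
    else f.1 i with hg1
  have hlt : ∀ (i : ℕ) (hi : i < b - a) (h : i < N),
      g1 ⟨i, hi⟩ = B.chainTo a (N - 1) (B.castV (by omega) (B.src e)) i (by omega) := by
    intro i hi h
    show dite _ _ _ = _
    rw [dif_pos h]
  have hat : ∀ (i : ℕ) (hi : i < b - a) (h : i = N),
      g1 ⟨i, hi⟩ = B.castE (show a + N = a + i by omega) e := by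
    intro i hi h
    show dite _ _ _ = _
    rw [dif_neg (show ¬ i < N by omega), dif_pos h]
  have hgt : ∀ (i : ℕ) (hi : i < b - a) (h : N < i), g1 ⟨i, hi⟩ = f.1 ⟨i, hi⟩ := by
    intro i hi h
    show dite _ _ _ = _
    rw [dif_neg (show ¬ i < N by omega), dif_neg (show ¬ i = N by omega)]
  have hcompat : ∀ (i : ℕ) (h : i + 1 < b - a),
      B.tgt (g1 ⟨i, by omega⟩) = B.src (g1 ⟨i + 1, h⟩) := by
    intro i h
    rcases lt_trichotomy (i + 1) N with hc | hc | hc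
    · rw [hlt i (by omega) (by omega), hlt (i + 1) (by omega) (by omega)]
      exact B.chainTo_chain a (N - 1) _ i (by omega) (by omega)
    · have hiN : i = N - 1 := by omega
      subst hiN
      rw [hlt (N - 1) (by omega) (by omega), hat (N - 1 + 1) (by omega) (by omega),
        B.src_castE]
      have hlast := B.chainTo_tgt_last a (N - 1)
        (B.castV (by omega : a + N = a + (N - 1) + 1) (B.src e))
      rw [hlast]
      try exact B.castV_eq_castV _ _ HEq.rfl
    · rcases Nat.lt_or_ge N i with hc2 | hc2
      · rw [hgt i (by omega) hc2, hgt (i + 1) (by omega) (by omega)]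
        exact f.2 i h
      · have hiN : i = N := by omega
        subst hiN
        rw [hat i (by omega) rfl, hgt (i + 1) (by omega) (by omega), B.tgt_castE]
        have h2 : B.tgt (f.1 ⟨i, by omega⟩) = B.src (f.1 ⟨i + 1, h⟩) := f.2 i h
        rw [hte, h2]
        try exact B.castV_self _ _
  refine ⟨⟨g1, hcompat⟩, ?_, hgt⟩
  show g1 ⟨N, hN⟩ = e
  rw [hat N hN rfl]
  exact B.castE_self _ e

theorem exists_telLT_gt {a b : ℕ} (f : B.TelE a b) {N : ℕ} (hN : N < b - a)
    (e : B.E (a + N)) (he : B.elt (f.1 ⟨N, hN⟩) e) :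
    ∃ g : B.TelE a b, B.telLT f g := by
  obtain ⟨g, hgN, hgt⟩ := B.exists_modBlock f hN e (B.elt_tgt _ _ _ he).symm
  exact ⟨g, N, hN, by rw [hgN]; exact he, fun i hi h => (hgt i hi h).symm⟩

theorem exists_telLT_lt {a b : ℕ} (f : B.TelE a b) {N : ℕ} (hN : N < b - a)
    (e : B.E (a + N)) (he : B.elt e (f.1 ⟨N, hN⟩)) :
    ∃ g : B.TelE a b, B.telLT g f := by
  obtain ⟨g, hgN, hgt⟩ := B.exists_modBlock f hN e (B.elt_tgt _ _ _ he)
  exact ⟨g, N, hN, by rw [hgN]; exact he, hgt⟩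

theorem telE_isMin_iff {a b : ℕ} (f : B.TelE a b) :
    (∀ g : B.TelE a b, ¬ B.telLT g f) ↔
      ∀ (j : ℕ) (hj : j < b - a), B.IsMinEdge (f.1 ⟨j, hj⟩) := by
  constructor
  · intro h j hj e he
    obtain ⟨g, hg⟩ := B.exists_telLT_lt f hj e he
    exact h g hg
  · rintro h g ⟨M, hM, helt, -⟩
    exact h M hM _ helt

theorem telE_isMax_iff {a b : ℕ} (f : B.TelE a b) :
    (∀ g : B.TelE a b, ¬ B.telLT f g) ↔
      ∀ (j : ℕ) (hj : j < b - a), B.IsMaxEdge (f.1 ⟨j, hj⟩) := by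
  constructor
  · intro h j hj e he
    obtain ⟨g, hg⟩ := B.exists_telLT_gt f hj e he
    exact h g hg
  · rintro h g ⟨M, hM, helt, -⟩
    exact h M hM _ helt

theorem pathLT_teleMap_iff (x y : B.PathSpace) :
    (B.Telescope ns hmono h0).pathLT (B.teleMap ns hmono h0 x) (B.teleMap ns hmono h0 y)
      ↔ B.pathLT x y := by
  constructor
  · rintro ⟨L, ⟨N', hN', helt, htail'⟩, htail⟩
    refine ⟨ns L + N', helt, ?_⟩
    intro n hn
    by_cases hc : n < ns (L + 1)
    · have h : x.1 (ns L + (n - ns L)) = y.1 (ns L + (n - ns L)) :=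
        htail' (n - ns L) (by omega) (by omega)
      rw [← B.path_edge_cast x (show ns L + (n - ns L) = n by omega),
        ← B.path_edge_cast y (show ns L + (n - ns L) = n by omega), h]
    · have hL : L < blk ns n := by
        by_contra hc2
        push_neg at hc2
        have := hmono.monotone (show blk ns n + 1 ≤ L + 1 by omega)
        have := lt_blk_succ ns hmono n
        omega
      have h := htail (blk ns n) hL
      have h1 : ns (blk ns n) ≤ n := blk_le ns h0 n
      have h2 : n < ns (blk ns n + 1) := lt_blk_succ ns hmono n
      have h3 : x.1 (ns (blk ns n) + (n - ns (blk ns n)))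
          = y.1 (ns (blk ns n) + (n - ns (blk ns n))) :=
        congrFun (congrArg Subtype.val h) ⟨n - ns (blk ns n), by omega⟩
      rw [← B.path_edge_cast x (show ns (blk ns n) + (n - ns (blk ns n)) = n by omega),
        ← B.path_edge_cast y (show ns (blk ns n) + (n - ns (blk ns n)) = n by omega), h3]
  · rintro ⟨N, helt, htail⟩
    have h1 : ns (blk ns N) ≤ N := blk_le ns h0 N
    have h2 : N < ns (blk ns N + 1) := lt_blk_succ ns hmono N
    refine ⟨blk ns N, ⟨N - ns (blk ns N), by omega, ?_, ?_⟩, ?_⟩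
    · show B.elt (x.1 (ns (blk ns N) + (N - ns (blk ns N))))
        (y.1 (ns (blk ns N) + (N - ns (blk ns N))))
      rw [← B.path_edge_cast x (show N = ns (blk ns N) + (N - ns (blk ns N)) by omega),
        ← B.path_edge_cast y (show N = ns (blk ns N) + (N - ns (blk ns N)) by omega)]
      exact (B.elt_castE_iff _ _ _).mpr helt
    · intro i hi hNi
      show x.1 (ns (blk ns N) + i) = y.1 (ns (blk ns N) + i)
      exact htail _ (by omega)
    · intro L' hL'
      refine Subtype.ext (funext fun j => ?_)
      show x.1 (ns L' + j.val) = y.1 (ns L' + j.val)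
      have := hmono.monotone (show blk ns N + 1 ≤ L' by omega)
      exact htail _ (by omega)

theorem isMaxPath_teleMap_iff (x : B.PathSpace) :
    (B.Telescope ns hmono h0).IsMaxPath (B.teleMap ns hmono h0 x) ↔ B.IsMaxPath x := by
  constructor
  · intro h n e he
    have h1 : ns (blk ns n) ≤ n := blk_le ns h0 n
    have h2 : n < ns (blk ns n + 1) := lt_blk_succ ns hmono n
    have he' : B.elt (x.1 (ns (blk ns n) + (n - ns (blk ns n))))
        (B.castE (show n = ns (blk ns n) + (n - ns (blk ns n)) by omega) e) := by
      rw [← B.path_edge_cast x (show n = ns (blk ns n) + (n - ns (blk ns n)) by omega)]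
      exact (B.elt_castE_iff _ _ _).mpr he
    obtain ⟨g, hg⟩ := B.exists_telLT_gt ((B.teleMap ns hmono h0 x).1 (blk ns n))
      (show n - ns (blk ns n) < ns (blk ns n + 1) - ns (blk ns n) by omega) _ he'
    exact h (blk ns n) g hg
  · rintro h l g ⟨M, hM, helt, -⟩
    exact h (ns l + M) _ helt

theorem isMinPath_teleMap_iff (x : B.PathSpace) :
    (B.Telescope ns hmono h0).IsMinPath (B.teleMap ns hmono h0 x) ↔ B.IsMinPath x := by
  constructor
  · intro h n e he
    have h1 : ns (blk ns n) ≤ n := blk_le ns h0 n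
    have h2 : n < ns (blk ns n + 1) := lt_blk_succ ns hmono n
    have he' : B.elt (B.castE (show n = ns (blk ns n) + (n - ns (blk ns n)) by omega) e)
        (x.1 (ns (blk ns n) + (n - ns (blk ns n)))) := by
      rw [← B.path_edge_cast x (show n = ns (blk ns n) + (n - ns (blk ns n)) by omega)]
      exact (B.elt_castE_iff _ _ _).mpr he
    obtain ⟨g, hg⟩ := B.exists_telLT_lt ((B.teleMap ns hmono h0 x).1 (blk ns n))
      (show n - ns (blk ns n) < ns (blk ns n + 1) - ns (blk ns n) by omega) _ he'
    exact h (blk ns n) g hg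
  · rintro h l g ⟨M, hM, helt, -⟩
    exact h (ns l + M) _ helt

theorem min_unique_tel (hproper : B.ProperlyOrdered)
    (u v : (B.Telescope ns hmono h0).PathSpace)
    (hu : (B.Telescope ns hmono h0).IsMinPath u)
    (hv : (B.Telescope ns hmono h0).IsMinPath v) : u = v := by
  have hu' : B.IsMinPath (B.teleInv ns hmono h0 u) := by
    rw [← B.isMinPath_teleMap_iff ns hmono h0, B.teleMap_teleInv]
    exact hu
  have hv' : B.IsMinPath (B.teleInv ns hmono h0 v) := by
    rw [← B.isMinPath_teleMap_iff ns hmono h0, B.teleMap_teleInv]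
    exact hv
  have := hproper.1.unique hu' hv'
  calc u = B.teleMap ns hmono h0 (B.teleInv ns hmono h0 u) := (B.teleMap_teleInv ns hmono h0 u).symm
    _ = B.teleMap ns hmono h0 (B.teleInv ns hmono h0 v) := by rw [this]
    _ = v := B.teleMap_teleInv ns hmono h0 v

theorem teleMap_vershik (hproper : B.ProperlyOrdered)
    (T : B.PathSpace ≃ B.PathSpace) (hT : B.IsVershik T)
    (T' : (B.Telescope ns hmono h0).PathSpace ≃ (B.Telescope ns hmono h0).PathSpace)
    (hT' : (B.Telescope ns hmono h0).IsVershik T') (x : B.PathSpace) :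
    B.teleMap ns hmono h0 (T x) = T' (B.teleMap ns hmono h0 x) := by
  by_cases hmax : B.IsMaxPath x
  · refine min_unique_tel B ns hmono h0 hproper _ _ ?_ ?_
    · exact (B.isMinPath_teleMap_iff ns hmono h0 _).mpr (hT.2 x hmax)
    · exact hT'.2 _ ((B.isMaxPath_teleMap_iff ns hmono h0 x).mpr hmax)
  · obtain ⟨hlt, hmin⟩ := hT.1 x hmax
    have hmax' : ¬ (B.Telescope ns hmono h0).IsMaxPath (B.teleMap ns hmono h0 x) := by
      rw [B.isMaxPath_teleMap_iff ns hmono h0 x]; exact hmax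
    obtain ⟨hlt', hmin'⟩ := hT'.1 _ hmax'
    refine succ_unique (B.Telescope ns hmono h0) (B.teleMap ns hmono h0 x) _ _
      ((B.pathLT_teleMap_iff ns hmono h0 x (T x)).mpr hlt) ?_ hlt' hmin'
    intro z h1 h2
    rw [← B.teleMap_teleInv ns hmono h0 z] at h1 h2
    exact hmin (B.teleInv ns hmono h0 z) ((B.pathLT_teleMap_iff ns hmono h0 _ _).mp h1)
      ((B.pathLT_teleMap_iff ns hmono h0 _ _).mp h2)

theorem iterZ_zero (T : B.PathSpace ≃ B.PathSpace) (x : B.PathSpace) :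
    B.iterZ T 0 x = x := by
  show ((T : Equiv.Perm B.PathSpace) ^ (0 : ℤ)) x = x
  rw [zpow_zero]
  rfl

theorem iterZ_add_one (T : B.PathSpace ≃ B.PathSpace) (m : ℤ) (x : B.PathSpace) :
    B.iterZ T (m + 1) x = B.iterZ T m (T x) := by
  show ((T : Equiv.Perm B.PathSpace) ^ (m + 1)) x = ((T : Equiv.Perm B.PathSpace) ^ m) (T x)
  rw [zpow_add_one]
  rfl

theorem iterZ_sub_one (T : B.PathSpace ≃ B.PathSpace) (m : ℤ) (x : B.PathSpace) :
    B.iterZ T (m - 1) x = B.iterZ T m (T.symm x) := by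
  show ((T : Equiv.Perm B.PathSpace) ^ (m - 1)) x = ((T : Equiv.Perm B.PathSpace) ^ m) (T.symm x)
  rw [zpow_sub_one]
  rfl

theorem teleMap_vershik_symm (hproper : B.ProperlyOrdered)
    (T : B.PathSpace ≃ B.PathSpace) (hT : B.IsVershik T)
    (T' : (B.Telescope ns hmono h0).PathSpace ≃ (B.Telescope ns hmono h0).PathSpace)
    (hT' : (B.Telescope ns hmono h0).IsVershik T') (x : B.PathSpace) :
    B.teleMap ns hmono h0 (T.symm x) = T'.symm (B.teleMap ns hmono h0 x) := by
  have h := B.teleMap_vershik ns hmono h0 hproper T hT T' hT' (T.symm x)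
  rw [Equiv.apply_symm_apply] at h
  rw [h, Equiv.symm_apply_apply]

theorem teleMap_iterZ (hproper : B.ProperlyOrdered)
    (T : B.PathSpace ≃ B.PathSpace) (hT : B.IsVershik T)
    (T' : (B.Telescope ns hmono h0).PathSpace ≃ (B.Telescope ns hmono h0).PathSpace)
    (hT' : (B.Telescope ns hmono h0).IsVershik T') (m : ℤ) (x : B.PathSpace) :
    B.teleMap ns hmono h0 (B.iterZ T m x)
      = (B.Telescope ns hmono h0).iterZ T' m (B.teleMap ns hmono h0 x) := by
  induction m using Int.induction_on generalizing x with
  | zero => rw [B.iterZ_zero, (B.Telescope ns hmono h0).iterZ_zero]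
  | succ i ih =>
      rw [B.iterZ_add_one, (B.Telescope ns hmono h0).iterZ_add_one,
        ← B.teleMap_vershik ns hmono h0 hproper T hT T' hT' x]
      exact ih (T x)
  | pred i ih =>
      rw [show (-(i : ℤ) - 1) = (-(i : ℤ)) - 1 by ring, B.iterZ_sub_one,
        (B.Telescope ns hmono h0).iterZ_sub_one,
        ← B.teleMap_vershik_symm ns hmono h0 hproper T hT T' hT' x]
      exact ih (T.symm x)

theorem sameCoding_teleMap_iff (hproper : B.ProperlyOrdered)
    (T : B.PathSpace ≃ B.PathSpace) (hT : B.IsVershik T)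
    (T' : (B.Telescope ns hmono h0).PathSpace ≃ (B.Telescope ns hmono h0).PathSpace)
    (hT' : (B.Telescope ns hmono h0).IsVershik T') (k : ℕ) (x y : B.PathSpace) :
    (B.Telescope ns hmono h0).SameCoding T' k (B.teleMap ns hmono h0 x) (B.teleMap ns hmono h0 y)
      ↔ B.SameCoding T (ns k) x y := by
  constructor
  · intro h m i hi
    have h1 : ns (blk ns i) ≤ i := blk_le ns h0 i
    have h2 : i < ns (blk ns i + 1) := lt_blk_succ ns hmono i
    have hbk : blk ns i < k := blk_lt_of_lt ns hmono h0 hi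
    have hb := h m (blk ns i) hbk
    rw [← B.teleMap_iterZ ns hmono h0 hproper T hT T' hT' m x,
      ← B.teleMap_iterZ ns hmono h0 hproper T hT T' hT' m y] at hb
    have h3 : (B.iterZ T m x).1 (ns (blk ns i) + (i - ns (blk ns i)))
        = (B.iterZ T m y).1 (ns (blk ns i) + (i - ns (blk ns i))) :=
      congrFun (congrArg Subtype.val hb) ⟨i - ns (blk ns i), by omega⟩
    rw [← B.path_edge_cast (B.iterZ T m x)
        (show ns (blk ns i) + (i - ns (blk ns i)) = i by omega),
      ← B.path_edge_cast (B.iterZ T m y)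
        (show ns (blk ns i) + (i - ns (blk ns i)) = i by omega), h3]
  · intro h m l hl
    rw [← B.teleMap_iterZ ns hmono h0 hproper T hT T' hT' m x,
      ← B.teleMap_iterZ ns hmono h0 hproper T hT T' hT' m y]
    refine Subtype.ext (funext fun j => ?_)
    show (B.iterZ T m x).1 (ns l + j.val) = (B.iterZ T m y).1 (ns l + j.val)
    have hj := j.isLt
    have hmono2 := hmono.monotone (show l + 1 ≤ k by omega)
    exact h m (ns l + j.val) (by omega)

theorem hasCut_teleMap (hproper : B.ProperlyOrdered)
    (T : B.PathSpace ≃ B.PathSpace) (hT : B.IsVershik T)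
    (T' : (B.Telescope ns hmono h0).PathSpace ≃ (B.Telescope ns hmono h0).PathSpace)
    (hT' : (B.Telescope ns hmono h0).IsVershik T') (j : ℕ) (x y : B.PathSpace)
    (h : (B.Telescope ns hmono h0).HasCut T' j (B.teleMap ns hmono h0 x)
      (B.teleMap ns hmono h0 y)) : B.HasCut T (ns j) x y := by
  obtain ⟨m, hx, hy⟩ := h
  have key : ∀ z : B.PathSpace,
      (∀ l : ℕ, l < j →
        (B.Telescope ns hmono h0).IsMinEdge
          (((B.Telescope ns hmono h0).iterZ T' m (B.teleMap ns hmono h0 z)).1 l)) →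
      ∀ i : ℕ, i < ns j → B.IsMinEdge ((B.iterZ T m z).1 i) := by
    intro z hz i hi
    have h1 : ns (blk ns i) ≤ i := blk_le ns h0 i
    have h2 : i < ns (blk ns i + 1) := lt_blk_succ ns hmono i
    have hbk : blk ns i < j := blk_lt_of_lt ns hmono h0 hi
    have hb := hz (blk ns i) hbk
    rw [← B.teleMap_iterZ ns hmono h0 hproper T hT T' hT' m z] at hb
    have hmin := (B.telE_isMin_iff ((B.teleMap ns hmono h0 (B.iterZ T m z)).1 (blk ns i))).mp
      hb (i - ns (blk ns i)) (by omega)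
    have hmin' : B.IsMinEdge ((B.iterZ T m z).1 (ns (blk ns i) + (i - ns (blk ns i)))) := hmin
    exact (B.isMinEdge_congr (B.iterZ T m z)
      (show ns (blk ns i) + (i - ns (blk ns i)) = i by omega)).mp hmin'
  exact ⟨m, key x hx, key y hy⟩

theorem hasCut_mono (T : B.PathSpace ≃ B.PathSpace) {j j₂ : ℕ} (h : j₂ ≤ j)
    (x y : B.PathSpace) (hc : B.HasCut T j x y) : B.HasCut T j₂ x y := by
  obtain ⟨m, h1, h2⟩ := hc
  exact ⟨m, fun i hi => h1 i (by omega), fun i hi => h2 i (by omega)⟩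

theorem exists_boundary (P : ℕ → Prop) : ∀ (b a : ℕ), a < b → P a → ¬ P b →
    ∃ k, a ≤ k ∧ k < b ∧ P k ∧ ¬ P (k + 1) := by
  intro b
  induction b with
  | zero => intro a h; omega
  | succ b ih =>
      intro a hab hPa hPb
      by_cases hb : P b
      · exact ⟨b, by omega, by omega, hb, hPb⟩
      · rcases Nat.lt_or_ge a b with h | h
        · obtain ⟨k, h1, h2, h3, h4⟩ := ih a h hPa hb
          exact ⟨k, h1, by omega, h3, h4⟩
        · have hab' : a = b := by omega
          subst hab'
          exact absurd hPa hb

end Aux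

end BDiagram

/-- If some telescoping of a simple, properly ordered
Bratteli–Vershik system is weakly well timed, then so is the system itself. -/
theorem weaklyWellTimed_lifts
    (B : BDiagram) (T : B.PathSpace ≃ B.PathSpace)
    (hproper : B.ProperlyOrdered) (hsimple : B.Simple) (hT : B.IsVershik T)
    (ns : ℕ → ℕ) (hmono : StrictMono ns) (h0 : ns 0 = 0)
    (T' : (B.Telescope ns hmono h0).PathSpace ≃ (B.Telescope ns hmono h0).PathSpace)
    (hT' : (B.Telescope ns hmono h0).IsVershik T')
    (hww : (B.Telescope ns hmono h0).WeaklyWellTimed T') :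
    B.WeaklyWellTimed T := by
  classical
  intro K
  obtain ⟨k', hk'K, hk'1, hj'⟩ := hww K
  have hnk' : k' ≤ ns k' := hmono.le_apply
  have key2 : ∀ t : ℕ, ∃ k, ns k' ≤ k ∧ k < ns (k' + 1) ∧
      ∃ x y, B.DepthPair T k x y ∧ B.HasCut T (ns (k' + 1 + t)) x y := by
    intro t
    obtain ⟨u, v, ⟨huv, hsc, hnsc⟩, hcut⟩ := hj' (k' + 1 + t) (by omega)
    set x := B.teleInv ns hmono h0 u with hx
    set y := B.teleInv ns hmono h0 v with hy
    have hu : B.teleMap ns hmono h0 x = u := B.teleMap_teleInv ns hmono h0 u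
    have hv : B.teleMap ns hmono h0 y = v := B.teleMap_teleInv ns hmono h0 v
    have hne : x ≠ y := by
      intro hxy
      apply huv
      rw [← hu, ← hv, hxy]
    have hsc' : B.SameCoding T (ns k') x y := by
      rw [← B.sameCoding_teleMap_iff ns hmono h0 hproper T hT T' hT', hu, hv]
      exact hsc
    have hnsc' : ¬ B.SameCoding T (ns (k' + 1)) x y := by
      intro hcon
      apply hnsc
      rw [← hu, ← hv]
      exact (B.sameCoding_teleMap_iff ns hmono h0 hproper T hT T' hT' (k' + 1) x y).mpr hcon
    have hcut' : B.HasCut T (ns (k' + 1 + t)) x y := by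
      apply B.hasCut_teleMap ns hmono h0 hproper T hT T' hT'
      rw [hu, hv]
      exact hcut
    obtain ⟨k, h1, h2, h3, h4⟩ := BDiagram.exists_boundary (fun k => B.SameCoding T k x y)
      (ns (k' + 1)) (ns k') (hmono (by omega)) hsc' hnsc'
    exact ⟨k, h1, h2, x, y, ⟨hne, h3, h4⟩, hcut'⟩
  choose kf h1f h2f xf yf hdf hcf using key2
  have hfin : ∃ k : Fin (ns (k' + 1)),
      Set.Infinite ((fun t => (⟨kf t, h2f t⟩ : Fin (ns (k' + 1)))) ⁻¹' {k}) := by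
    obtain ⟨k, hk⟩ := Finite.exists_infinite_fiber
      (fun t : ℕ => (⟨kf t, h2f t⟩ : Fin (ns (k' + 1))))
    exact ⟨k, Set.infinite_coe_iff.mp hk⟩
  obtain ⟨k, hk⟩ := hfin
  obtain ⟨t0, ht0, -⟩ := hk.exists_gt 0
  have hkk : ns k' ≤ k.val := by
    have h1 := h1f t0
    have ht0' : kf t0 = k.val := congrArg Fin.val ht0
    omega
  refine ⟨k.val, by omega, by omega, ?_⟩
  intro j hj
  obtain ⟨t, ht, htgt⟩ := hk.exists_gt j
  have hkt : kf t = k.val := congrArg Fin.val ht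
  have hcut := hcf t
  have hdep := hdf t
  rw [hkt] at hdep
  refine ⟨xf t, yf t, hdep, ?_⟩
  refine B.hasCut_mono T ?_ _ _ hcut
  have h5 : k' + 1 + t ≤ ns (k' + 1 + t) := hmono.le_apply
  omega
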